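/- For the extended CIR generator, setting κ = √((1/2 − θ/σ²)² + αβ(β−1)) + 1/2 − θ/σ², the pair λ = μκ + 2θμ/σ² and φ(x) = e^{−2μx/σ²} x^κ satisfies (1/2)σ²x φ''(x) + (θ+μx)φ'(x) − (1/2)αβ(β−1)σ²(1/x)φ(x) = −λφ(x) for all x > 0. -/

import Mathlib

/-- Extended CIR eigenpair: with κ = √((1/2 − θ/σ²)² + αβ(β−1)) + 1/2 − θ/σ²,
the pair (μκ + 2θμ/σ², e^{−2μx/σ²} x^κ) solves the eigenvalue equation. -/
theorem ext_cir_eigenpair (μ σ θ α β : ℝ) (hμ : 0 < μ) (hσ : 0 < σ) (hθ : σ^2 ≤ θ)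
    (hα0 : 0 < α) (hα1 : α ≤ 1) (hβ : β * (β - 1) ≥ 0)
    (κ : ℝ) (hκ : κ = Real.sqrt ((1/2 - θ/σ^2)^2 + α*β*(β-1)) + 1/2 - θ/σ^2)
    (φ : ℝ → ℝ) (hφ : ∀ x, φ x = Real.exp (-(2*μ*x)/σ^2) * x ^ κ)
    (lam : ℝ) (hlam : lam = μ * κ + 2*θ*μ/σ^2) :
    ∀ x > 0,
      (1/2) * σ^2 * x * deriv (deriv φ) x + (θ + μ * x) * deriv φ x
        - (1/2) * α * β * (β - 1) * σ^2 * (1/x) * φ x = -lam * φ x := by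
  intro x hx
  have hσ2 : (0:ℝ) < σ^2 := by positivity
  set c : ℝ := 2*μ/σ^2 with hc
  -- key algebraic identity for κ
  have hA : 0 ≤ α*β*(β-1) := by
    have : α*β*(β-1) = α*(β*(β-1)) := by ring
    rw [this]; exact mul_nonneg hα0.le hβ
  have hsq : (Real.sqrt ((1/2 - θ/σ^2)^2 + α*β*(β-1)))^2
      = (1/2 - θ/σ^2)^2 + α*β*(β-1) :=
    Real.sq_sqrt (by positivity)
  have hiden : κ^2*σ^2 - κ*σ^2 + 2*θ*κ = α*β*(β-1)*σ^2 := by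
    have hs : Real.sqrt ((1/2 - θ/σ^2)^2 + α*β*(β-1)) = κ - 1/2 + θ/σ^2 := by
      rw [hκ]; ring
    rw [hs] at hsq
    have h1 : (κ - 1/2 + θ/σ^2)^2 * σ^2^2 = ((1/2 - θ/σ^2)^2 + α*β*(β-1)) * σ^2^2 := by
      rw [hsq]
    field_simp at h1
    nlinarith [h1]
  -- first derivative
  have hD : ∀ y : ℝ, 0 < y → HasDerivAt φ
      (Real.exp (-(2*μ*y)/σ^2) * (-c * y ^ κ + κ * y ^ (κ-1))) y := by
    intro y hy
    have h1 : HasDerivAt (fun z : ℝ => -(2*μ*z)/σ^2) (-c) y := by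
      have := (((hasDerivAt_id y).const_mul (2*μ)).neg).div_const (σ^2)
      simpa [hc, neg_div] using this
    have hE : HasDerivAt (fun z : ℝ => Real.exp (-(2*μ*z)/σ^2))
        (Real.exp (-(2*μ*y)/σ^2) * (-c)) y := h1.exp
    have hP : HasDerivAt (fun z : ℝ => z ^ κ) (κ * y ^ (κ-1)) y :=
      Real.hasDerivAt_rpow_const (Or.inl hy.ne')
    have heq : φ = fun z => Real.exp (-(2*μ*z)/σ^2) * z ^ κ := funext hφ
    rw [heq]
    have := hE.mul hP
    refine this.congr_deriv ?_
    ring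
  have hd1 : deriv φ x = Real.exp (-(2*μ*x)/σ^2) * (-c * x ^ κ + κ * x ^ (κ-1)) :=
    (hD x hx).deriv
  -- second derivative
  have hD2 : HasDerivAt (deriv φ)
      (Real.exp (-(2*μ*x)/σ^2) * (c^2 * x ^ κ - 2*c*κ * x ^ (κ-1) + κ*(κ-1) * x ^ (κ-2))) x := by
    have hEv : deriv φ =ᶠ[nhds x]
        (fun z => Real.exp (-(2*μ*z)/σ^2) * (-c * z ^ κ + κ * z ^ (κ-1))) := by
      filter_upwards [Ioi_mem_nhds hx] with y hy
      exact (hD y hy).deriv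
    have h1 : HasDerivAt (fun z : ℝ => -(2*μ*z)/σ^2) (-c) x := by
      have := (((hasDerivAt_id x).const_mul (2*μ)).neg).div_const (σ^2)
      simpa [hc, neg_div] using this
    have hE : HasDerivAt (fun z : ℝ => Real.exp (-(2*μ*z)/σ^2))
        (Real.exp (-(2*μ*x)/σ^2) * (-c)) x := h1.exp
    have hP1 : HasDerivAt (fun z : ℝ => z ^ κ) (κ * x ^ (κ-1)) x :=
      Real.hasDerivAt_rpow_const (Or.inl hx.ne')
    have hP2 : HasDerivAt (fun z : ℝ => z ^ (κ-1)) ((κ-1) * x ^ (κ-1-1)) x :=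
      Real.hasDerivAt_rpow_const (Or.inl hx.ne')
    have hG : HasDerivAt (fun z : ℝ => -c * z ^ κ + κ * z ^ (κ-1))
        (-c * (κ * x ^ (κ-1)) + κ * ((κ-1) * x ^ (κ-1-1))) x :=
      ((hP1.const_mul (-c)).add (hP2.const_mul κ))
    have := hE.mul hG
    refine HasDerivAt.congr_of_eventuallyEq ?_ hEv
    refine this.congr_deriv ?_
    have : κ - 1 - 1 = κ - 2 := by ring
    rw [this]
    ring
  have hd2 : deriv (deriv φ) x
      = Real.exp (-(2*μ*x)/σ^2) * (c^2 * x ^ κ - 2*c*κ * x ^ (κ-1) + κ*(κ-1) * x ^ (κ-2)) :=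
    hD2.deriv
  -- rpow reductions
  have hX1 : x ^ (κ-1) = x ^ κ / x := by
    rw [Real.rpow_sub hx, Real.rpow_one]
  have hX2 : x ^ (κ-2) = x ^ κ / x / x := by
    have : κ - 2 = κ - 1 - 1 := by ring
    rw [this, Real.rpow_sub hx, Real.rpow_one, hX1]
  rw [hd1, hd2, hφ x, hX1, hX2, hlam, hc]
  have hx' : x ≠ 0 := hx.ne'
  have hσ2' : σ^2 ≠ 0 := hσ2.ne'
  field_simp
  linear_combination σ^2 * hiden
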